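/- Fix n ∈ {1,…,N} and a natural number β ≥ 1. Regard ρ(x) = 1 − Σ_{m=0}^N S_m(x)^β as a function of the n-th metric matrix D_n (all other data fixed). If D_nᵀ(x − x_n) ≠ 0, then this function is differentiable at D_n and its Fréchet derivative in the matrix direction H equals −β·[S_0(x)^{β−1}·S_0(x)·S_n(x) + Σ_{m=1}^N S_m(x)^{β−1}·S_m(x)·(S_n(x) − δ_{mn})]·(vᵀ H D_nᵀ v)/d_n(x, x_n), where v = x − x_n; equivalently the gradient matrix is −Σ_{m=0}^N β S_m^{β−1} ∂S_m/∂D_n with ∂S_m/∂D_n = S_m(S_n − δ_{mn}) d_n (X_n ⊗ X_n)D_n for m ≥ 1, ∂S_0/∂D_n = S_0 S_n d_n (X_n ⊗ X_n)D_n, and X_n = (x_n − x)/d_n(x, x_n). -/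

import Mathlib

open Matrix

/-- The anisotropic (Mahalanobis-type) length `sqrt(uᵀ A u)`. -/
noncomputable def mdist {d : ℕ} (A : Matrix (Fin d) (Fin d) ℝ) (u : Fin d → ℝ) : ℝ :=
  Real.sqrt (u ⬝ᵥ A.mulVec u)

/-- The denominator `ε_s + ∑_{k=1}^N exp(−d_k(x, x_k))` with `A_k = D_k D_kᵀ`. -/
noncomputable def Sden {d N : ℕ} (p : Fin N → Fin d → ℝ)
    (D : Fin N → Matrix (Fin d) (Fin d) ℝ) (ε : ℝ) (x : Fin d → ℝ) : ℝ :=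
  ε + ∑ k, Real.exp (-(mdist (D k * (D k)ᵀ) (x - p k)))

/-- `S_m(x) = exp(−d_m(x, x_m)) / (ε_s + ∑_k exp(−d_k(x, x_k)))` for `m = 1,…,N`. -/
noncomputable def S {d N : ℕ} (p : Fin N → Fin d → ℝ)
    (D : Fin N → Matrix (Fin d) (Fin d) ℝ) (ε : ℝ) (x : Fin d → ℝ) (m : Fin N) : ℝ :=
  Real.exp (-(mdist (D m * (D m)ᵀ) (x - p m))) / Sden p D ε x

/-- `S_0(x) = ε_s / (ε_s + ∑_k exp(−d_k(x, x_k)))`. -/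
noncomputable def S0 {d N : ℕ} (p : Fin N → Fin d → ℝ)
    (D : Fin N → Matrix (Fin d) (Fin d) ℝ) (ε : ℝ) (x : Fin d → ℝ) : ℝ :=
  ε / Sden p D ε x

/-- The density `ρ(x) = 1 − ∑_{m=0}^N S_m(x)^β`. -/
noncomputable def rho {d N : ℕ} (β : ℕ) (p : Fin N → Fin d → ℝ)
    (D : Fin N → Matrix (Fin d) (Fin d) ℝ) (ε : ℝ) (x : Fin d → ℝ) : ℝ :=
  1 - (S0 p D ε x ^ β + ∑ m, S p D ε x m ^ β)


-- linear map M ↦ (of M)ᵀ.mulVec v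
noncomputable def ellCLM {d : ℕ} (v : Fin d → ℝ) :
    (Fin d → Fin d → ℝ) →L[ℝ] (Fin d → ℝ) :=
  LinearMap.toContinuousLinearMap
    { toFun := fun M => (Matrix.of M)ᵀ.mulVec v
      map_add' := by
        intro M N
        show ((Matrix.of M + Matrix.of N)ᵀ).mulVec v = _
        rw [Matrix.transpose_add, Matrix.add_mulVec]
      map_smul' := by
        intro c M
        show ((c • Matrix.of M)ᵀ).mulVec v = _
        rw [Matrix.transpose_smul, Matrix.smul_mulVec]
        rfl }

noncomputable def dotCLM {d : ℕ} (w : Fin d → ℝ) : (Fin d → ℝ) →L[ℝ] ℝ :=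
  LinearMap.toContinuousLinearMap
    { toFun := fun u => w ⬝ᵥ u
      map_add' := fun a b => dotProduct_add w a b
      map_smul' := fun c a => by simp [dotProduct_smul] }

example {d : ℕ} (v w : Fin d → ℝ) (M : Fin d → Fin d → ℝ) : True := trivial

lemma ellCLM_apply {d : ℕ} (v : Fin d → ℝ) (M : Fin d → Fin d → ℝ) :
    ellCLM v M = (Matrix.of M)ᵀ.mulVec v := rfl

lemma dotCLM_apply {d : ℕ} (w u : Fin d → ℝ) : dotCLM w u = w ⬝ᵥ u := rfl

-- key identity
lemma dot_ident {d : ℕ} (v : Fin d → ℝ) (A B : Matrix (Fin d) (Fin d) ℝ) :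
    v ⬝ᵥ (A * Bᵀ).mulVec v = (Bᵀ.mulVec v) ⬝ᵥ (Aᵀ.mulVec v) := by
  rw [← Matrix.mulVec_mulVec, Matrix.dotProduct_mulVec, ← Matrix.mulVec_transpose,
    dotProduct_comm]

-- derivative of φ(M) = (ellCLM v M) ⬝ᵥ (ellCLM v M)
lemma phi_hasFDerivAt {d : ℕ} (v : Fin d → ℝ) (M0 : Fin d → Fin d → ℝ) :
    HasFDerivAt (fun M : Fin d → Fin d → ℝ => (ellCLM v M) ⬝ᵥ (ellCLM v M))
      ((2 : ℝ) • ((dotCLM (ellCLM v M0)).comp (ellCLM v))) M0 := by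
  have h : ∀ i : Fin d, HasFDerivAt (fun M : Fin d → Fin d → ℝ => (ellCLM v M i) * (ellCLM v M i))
      ((ellCLM v M0 i) • ((ContinuousLinearMap.proj i).comp (ellCLM v)) +
       (ellCLM v M0 i) • ((ContinuousLinearMap.proj i).comp (ellCLM v))) M0 := by
    intro i
    have hi : HasFDerivAt (fun M : Fin d → Fin d → ℝ => ellCLM v M i)
        ((ContinuousLinearMap.proj i).comp (ellCLM v)) M0 :=
      (((ContinuousLinearMap.proj (R := ℝ) (φ := fun _ : Fin d => ℝ) i).comp
        (ellCLM v))).hasFDerivAt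
    exact hi.mul hi
  have hsum := HasFDerivAt.fun_sum (fun i (_ : i ∈ Finset.univ) => h i)
  have hfun : (fun M : Fin d → Fin d → ℝ => (ellCLM v M) ⬝ᵥ (ellCLM v M)) =
      fun M => ∑ i, (ellCLM v M i) * (ellCLM v M i) := rfl
  have hmap : ((2 : ℝ) • ((dotCLM (ellCLM v M0)).comp (ellCLM v))) =
      ∑ i : Fin d, ((ellCLM v M0 i) • ((ContinuousLinearMap.proj i).comp (ellCLM v)) +
        (ellCLM v M0 i) • ((ContinuousLinearMap.proj i).comp (ellCLM v))) := by
    apply ContinuousLinearMap.ext; intro H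
    rw [ContinuousLinearMap.sum_apply]
    show (2 : ℝ) * (∑ i, ellCLM v M0 i * ellCLM v H i) = _
    rw [Finset.mul_sum]
    refine Finset.sum_congr rfl fun i _ => ?_
    show 2 * (ellCLM v M0 i * ellCLM v H i) =
      (ellCLM v M0 i) * (ellCLM v H i) + (ellCLM v M0 i) * (ellCLM v H i)
    ring
  rw [hfun, hmap]
  exact hsum

lemma mdist_eq {d : ℕ} (v : Fin d → ℝ) (M : Fin d → Fin d → ℝ) :
    mdist (Matrix.of M * (Matrix.of M)ᵀ) v = Real.sqrt ((ellCLM v M) ⬝ᵥ (ellCLM v M)) := by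
  rw [mdist, dot_ident]; rfl

lemma dot_self_pos {d : ℕ} {w : Fin d → ℝ} (hw : w ≠ 0) : 0 < w ⬝ᵥ w := by
  rcases lt_or_eq_of_le (Finset.sum_nonneg fun i _ => mul_self_nonneg (w i)) with h | h
  · exact h
  · exfalso; apply hw; funext i
    have := (Finset.sum_eq_zero_iff_of_nonneg
      (fun i _ => mul_self_nonneg (w i))).mp h.symm i (Finset.mem_univ i)
    exact mul_self_eq_zero.mp this

lemma mdist_hasFDerivAt {d : ℕ} (v : Fin d → ℝ) (M0 : Fin d → Fin d → ℝ)
    (hw : (Matrix.of M0)ᵀ.mulVec v ≠ 0) :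
    HasFDerivAt (fun M : Fin d → Fin d → ℝ => mdist (Matrix.of M * (Matrix.of M)ᵀ) v)
      ((mdist (Matrix.of M0 * (Matrix.of M0)ᵀ) v)⁻¹ •
        ((dotCLM (ellCLM v M0)).comp (ellCLM v))) M0 := by
  have hw' : ellCLM v M0 ≠ 0 := hw
  have hpos : 0 < (ellCLM v M0) ⬝ᵥ (ellCLM v M0) := dot_self_pos hw'
  have hsq := Real.hasDerivAt_sqrt (ne_of_gt hpos)
  have hφ := phi_hasFDerivAt v M0
  have hcomp := hsq.comp_hasFDerivAt M0 hφ
  have hfun : (fun M : Fin d → Fin d → ℝ => mdist (Matrix.of M * (Matrix.of M)ᵀ) v) =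
      fun M => Real.sqrt ((ellCLM v M) ⬝ᵥ (ellCLM v M)) := funext fun M => mdist_eq v M
  rw [hfun, mdist_eq]
  refine hcomp.congr_fderiv ?_
  rw [smul_smul]
  congr 1
  have hs : Real.sqrt ((ellCLM v M0) ⬝ᵥ (ellCLM v M0)) ≠ 0 :=
    ne_of_gt (Real.sqrt_pos.mpr hpos)
  field_simp

set_option maxHeartbeats 2000000 in
/-- Regarding `ρ(x) = 1 − ∑_{m=0}^N S_m(x)^β` as a function of the `n`-th metric matrix
`D_n` (matrices encoded as `Fin d → Fin d → ℝ`, with the Frobenius pairing in the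
direction `H`), if `D_nᵀ(x − x_n) ≠ 0` then it is differentiable at `D_n` and its
Fréchet derivative in the direction `H` equals
`−β·[S_0^{β−1}·S_0·S_n + ∑_{m=1}^N S_m^{β−1}·S_m·(S_n − δ_{mn})]·(vᵀ H D_nᵀ v)/d_n`,
where `v = x − x_n`. -/
theorem rho_differentiableAt_metric {d N : ℕ} (β : ℕ) (hβ : 1 ≤ β)
    (p : Fin N → Fin d → ℝ)
    (D : Fin N → Matrix (Fin d) (Fin d) ℝ)
    (ε : ℝ) (hε : 0 ≤ ε) (x : Fin d → ℝ) (n : Fin N)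
    (h : (D n)ᵀ.mulVec (x - p n) ≠ 0) :
    DifferentiableAt ℝ
        (fun M : Fin d → Fin d → ℝ =>
          rho β p (Function.update D n (Matrix.of M)) ε x) (D n) ∧
      ∀ H : Fin d → Fin d → ℝ,
        fderiv ℝ (fun M : Fin d → Fin d → ℝ =>
            rho β p (Function.update D n (Matrix.of M)) ε x) (D n) H =
          -(β : ℝ) *
            (S0 p D ε x ^ (β - 1) * (S0 p D ε x * S p D ε x n) +
              ∑ m, S p D ε x m ^ (β - 1) *
                (S p D ε x m * (S p D ε x n - if m = n then 1 else 0))) *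
            ((x - p n) ⬝ᵥ (Matrix.of H * (D n)ᵀ).mulVec (x - p n)) /
              mdist (D n * (D n)ᵀ) (x - p n) := by
  classical
  letI : NormedAddCommGroup (Matrix (Fin d) (Fin d) ℝ) :=
    (inferInstance : NormedAddCommGroup (Fin d → Fin d → ℝ))
  letI : NormedSpace ℝ (Matrix (Fin d) (Fin d) ℝ) :=
    (inferInstance : NormedSpace ℝ (Fin d → Fin d → ℝ))
  set v : Fin d → ℝ := x - p n with hv
  set L : (Fin d → Fin d → ℝ) →L[ℝ] ℝ :=
    (dotCLM (ellCLM v (D n))).comp (ellCLM v) with hL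
  have hLapp : ∀ H : Fin d → Fin d → ℝ,
      L H = v ⬝ᵥ (Matrix.of H * (D n)ᵀ).mulVec v := fun H =>
    (dot_ident v (Matrix.of H) (D n)).symm
  set dn0 : ℝ := mdist (D n * (D n)ᵀ) v with hdn0
  have hwne : ellCLM v (D n) ≠ 0 := h
  have hdnpos : 0 < dn0 := by
    rw [hdn0, show mdist (D n * (D n)ᵀ) v
      = Real.sqrt ((ellCLM v (D n)) ⬝ᵥ (ellCLM v (D n))) from mdist_eq v (D n)]
    exact Real.sqrt_pos.mpr (dot_self_pos hwne)
  have hdnne : dn0 ≠ 0 := ne_of_gt hdnpos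
  set E0 : ℝ := Real.exp (-dn0) with hE0
  -- derivative of the anisotropic distance
  have hdn : HasFDerivAt
      (fun M : Fin d → Fin d → ℝ => mdist (Matrix.of M * (Matrix.of M)ᵀ) v)
      (dn0⁻¹ • L) (D n) := mdist_hasFDerivAt v (D n) h
  -- derivative of exp(-dist)
  have hE : HasFDerivAt
      (fun M : Fin d → Fin d → ℝ => Real.exp (-(mdist (Matrix.of M * (Matrix.of M)ᵀ) v)))
      ((-(E0 * dn0⁻¹)) • L) (D n) := by
    have := hdn.fun_neg.exp
    rw [smul_neg, smul_smul] at this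
    exact this.congr_fderiv (neg_smul _ _).symm
  -- the denominator as a function of M
  set SdF : (Fin d → Fin d → ℝ) → ℝ :=
    fun M => Sden p (Function.update D n (Matrix.of M)) ε x with hSdF
  have hSdF_eq : SdF = fun M =>
      (ε + ∑ k ∈ Finset.univ.erase n, Real.exp (-(mdist (D k * (D k)ᵀ) (x - p k)))) +
        Real.exp (-(mdist (Matrix.of M * (Matrix.of M)ᵀ) v)) := by
    funext M
    simp only [hSdF, Sden]
    have hs : ∑ k ∈ Finset.univ.erase n,
        Real.exp (-(mdist (Function.update D n (Matrix.of M) k *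
          (Function.update D n (Matrix.of M) k)ᵀ) (x - p k))) =
        ∑ k ∈ Finset.univ.erase n, Real.exp (-(mdist (D k * (D k)ᵀ) (x - p k))) :=
      Finset.sum_congr rfl fun k hk => by
        rw [Function.update_of_ne (Finset.ne_of_mem_erase hk)]
    rw [← Finset.sum_erase_add _ _ (Finset.mem_univ n), Function.update_self, hs, ← add_assoc]
  have hupd : Function.update D n (Matrix.of (D n)) = D := Function.update_eq_self n D
  have hSdF_val : SdF (D n) = Sden p D ε x := by simp only [hSdF, hupd]
  set g0 : ℝ := Sden p D ε x with hg0
  have hg0pos : 0 < g0 := by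
    rw [hg0]
    exact add_pos_of_nonneg_of_pos hε
      (Finset.sum_pos (fun k _ => Real.exp_pos _) ⟨n, Finset.mem_univ n⟩)
  have hg0ne : g0 ≠ 0 := ne_of_gt hg0pos
  have hSd : HasFDerivAt SdF ((-(E0 * dn0⁻¹)) • L) (D n) := by
    rw [hSdF_eq]; exact hE.const_add _
  -- derivative of inverse of denominator
  have hInv : HasFDerivAt (fun M => (SdF M)⁻¹)
      ((-(g0 ^ 2)⁻¹ * -(E0 * dn0⁻¹)) • L) (D n) := by
    have h1 : HasFDerivAt (fun M => (SdF M)⁻¹)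
        ((-(SdF (D n) ^ 2)⁻¹) • ((-(E0 * dn0⁻¹)) • L)) (D n) :=
      (hasDerivAt_inv (x := SdF (D n)) (by rw [hSdF_val]; exact hg0ne)).comp_hasFDerivAt
        ((D n : Fin d → Fin d → ℝ)) hSd
    rw [hSdF_val] at h1
    rw [← smul_smul]
    exact h1
  -- value identities
  have hSval : ∀ m, S p D ε x m =
      Real.exp (-(mdist (D m * (D m)ᵀ) (x - p m))) / g0 := fun m => rfl
  have hSnval : S p D ε x n = E0 / g0 := rfl
  have hS0val : S0 p D ε x = ε / g0 := rfl
  -- derivative of each S m (as a function of the n-th matrix)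
  have hSm : ∀ m : Fin N, HasFDerivAt
      (fun M : Fin d → Fin d → ℝ => S p (Function.update D n (Matrix.of M)) ε x m)
      ((S p D ε x m * (S p D ε x n - if m = n then 1 else 0) * dn0⁻¹) • L) (D n) := by
    intro m
    by_cases hm : m = n
    · subst hm
      have hfun : (fun M : Fin d → Fin d → ℝ =>
          S p (Function.update D m (Matrix.of M)) ε x m) =
          fun M => Real.exp (-(mdist (Matrix.of M * (Matrix.of M)ᵀ) v)) * (SdF M)⁻¹ := by
        funext M
        simp only [S, hSdF, Function.update_self, div_eq_mul_inv]
        rfl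
      rw [hfun]
      have h2 := hE.mul hInv
      have h3 : (Real.exp (-(mdist (Matrix.of (D m) * (Matrix.of (D m))ᵀ) v))) = E0 := rfl
      rw [h3, hSdF_val] at h2
      have h4 : E0 • ((-(g0 ^ 2)⁻¹ * -(E0 * dn0⁻¹)) • L) + g0⁻¹ • ((-(E0 * dn0⁻¹)) • L)
          = ((S p D ε x m * (S p D ε x m - 1) * dn0⁻¹)) • L := by
        rw [smul_smul, smul_smul, ← add_smul]
        congr 1
        rw [hSnval]
        ring
      rw [if_pos rfl, ← h4]
      exact h2
    · have hfun : (fun M : Fin d → Fin d → ℝ =>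
          S p (Function.update D n (Matrix.of M)) ε x m) =
          fun M => Real.exp (-(mdist (D m * (D m)ᵀ) (x - p m))) * (SdF M)⁻¹ := by
        funext M
        simp only [S, hSdF, Function.update_of_ne hm, div_eq_mul_inv]
      rw [hfun]
      have h2 := hInv.const_mul (Real.exp (-(mdist (D m * (D m)ᵀ) (x - p m))))
      have h4 : Real.exp (-(mdist (D m * (D m)ᵀ) (x - p m))) •
            ((-(g0 ^ 2)⁻¹ * -(E0 * dn0⁻¹)) • L)
          = (S p D ε x m * (S p D ε x n - if m = n then 1 else 0) * dn0⁻¹) • L := by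
        rw [smul_smul]
        congr 1
        rw [if_neg hm, hSnval, hSval m]
        ring
      rw [← h4]
      exact h2
  -- derivative of S0
  have hS0 : HasFDerivAt
      (fun M : Fin d → Fin d → ℝ => S0 p (Function.update D n (Matrix.of M)) ε x)
      ((S0 p D ε x * S p D ε x n * dn0⁻¹) • L) (D n) := by
    have hfun : (fun M : Fin d → Fin d → ℝ =>
        S0 p (Function.update D n (Matrix.of M)) ε x) = fun M => ε * (SdF M)⁻¹ := by
      funext M; show ε / SdF M = _; rw [div_eq_mul_inv]
    rw [hfun]
    have h2 := hInv.const_mul ε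
    have h4 : ε • ((-(g0 ^ 2)⁻¹ * -(E0 * dn0⁻¹)) • L)
        = (S0 p D ε x * S p D ε x n * dn0⁻¹) • L := by
      rw [smul_smul]
      congr 1
      rw [hSnval, hS0val]
      ring
    rw [← h4]
    exact h2
  -- powers
  have hSmval : ∀ m, S p (Function.update D n (Matrix.of (D n))) ε x m = S p D ε x m := by
    intro m; rw [hupd]
  have hS0valupd : S0 p (Function.update D n (Matrix.of (D n))) ε x = S0 p D ε x := by
    rw [hupd]
  have hpow : ∀ m : Fin N, HasFDerivAt
      (fun M : Fin d → Fin d → ℝ => (S p (Function.update D n (Matrix.of M)) ε x m) ^ β)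
      (((β : ℝ) * (S p D ε x m) ^ (β - 1) *
        (S p D ε x m * (S p D ε x n - if m = n then 1 else 0) * dn0⁻¹)) • L) (D n) := by
    intro m
    have h2 : HasFDerivAt
        (fun M : Fin d → Fin d → ℝ => (S p (Function.update D n (Matrix.of M)) ε x m) ^ β)
        (((β : ℝ) * (S p (Function.update D n (Matrix.of (D n))) ε x m) ^ (β - 1)) •
          ((S p D ε x m * (S p D ε x n - if m = n then 1 else 0) * dn0⁻¹) • L)) (D n) :=
      (hasDerivAt_pow β (S p (Function.update D n (Matrix.of (D n))) ε x m)).comp_hasFDerivAt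
        ((D n : Fin d → Fin d → ℝ)) (hSm m)
    rw [hSmval m] at h2
    rw [← smul_smul]
    exact h2
  have hpow0 : HasFDerivAt
      (fun M : Fin d → Fin d → ℝ => (S0 p (Function.update D n (Matrix.of M)) ε x) ^ β)
      (((β : ℝ) * (S0 p D ε x) ^ (β - 1) *
        (S0 p D ε x * S p D ε x n * dn0⁻¹)) • L) (D n) := by
    have h2 : HasFDerivAt
        (fun M : Fin d → Fin d → ℝ => (S0 p (Function.update D n (Matrix.of M)) ε x) ^ β)
        (((β : ℝ) * (S0 p (Function.update D n (Matrix.of (D n))) ε x) ^ (β - 1)) •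
          ((S0 p D ε x * S p D ε x n * dn0⁻¹) • L)) (D n) :=
      (hasDerivAt_pow β (S0 p (Function.update D n (Matrix.of (D n))) ε x)).comp_hasFDerivAt
        ((D n : Fin d → Fin d → ℝ)) hS0
    rw [hS0valupd] at h2
    rw [← smul_smul]
    exact h2
  -- rho
  have hsum := HasFDerivAt.fun_sum (u := Finset.univ) (fun m (_ : m ∈ Finset.univ) => hpow m)
  have hadd := hpow0.fun_add hsum
  have hrho : HasFDerivAt
      (fun M : Fin d → Fin d → ℝ => rho β p (Function.update D n (Matrix.of M)) ε x)
      ((-(((β : ℝ) * (S0 p D ε x) ^ (β - 1) * (S0 p D ε x * S p D ε x n * dn0⁻¹)) +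
        ∑ m, (β : ℝ) * (S p D ε x m) ^ (β - 1) *
          (S p D ε x m * (S p D ε x n - if m = n then 1 else 0) * dn0⁻¹))) • L) (D n) := by
    have h5 := hadd.const_sub 1
    have h6 : (∑ m : Fin N, ((β : ℝ) * (S p D ε x m) ^ (β - 1) *
        (S p D ε x m * (S p D ε x n - if m = n then 1 else 0) * dn0⁻¹)) • L)
        = (∑ m : Fin N, (β : ℝ) * (S p D ε x m) ^ (β - 1) *
        (S p D ε x m * (S p D ε x n - if m = n then 1 else 0) * dn0⁻¹)) • L :=
      (Finset.sum_smul).symm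
    rw [h6, ← add_smul, ← neg_smul] at h5
    exact h5
  refine ⟨hrho.differentiableAt, fun H => ?_⟩
  rw [hrho.fderiv]
  rw [ContinuousLinearMap.smul_apply, hLapp H, smul_eq_mul]
  have h7 : (∑ m : Fin N, (β : ℝ) * (S p D ε x m) ^ (β - 1) *
      (S p D ε x m * (S p D ε x n - if m = n then 1 else 0) * dn0⁻¹))
      = (β : ℝ) * dn0⁻¹ * ∑ m : Fin N, (S p D ε x m) ^ (β - 1) *
      (S p D ε x m * (S p D ε x n - if m = n then 1 else 0)) := by
    rw [Finset.mul_sum]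
    exact Finset.sum_congr rfl fun m _ => by ring
  rw [h7]
  field_simp
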